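/- (Robbins) A graph G (finite, undirected; parallel edges and self-loops allowed) is 2-edge-connected if and only if G has an ear decomposition. -/

import Mathlib

namespace EdgeOrders

variable {V E V' E' : Type}

/-- A multigraph on vertex type `V` and edge type `E` is given by a map `ends`
sending each edge to the unordered pair of its endpoints (self-loops and
parallel edges are allowed).
`IsWalkSeq ends vs es` states that `vs` is the vertex sequence and `es` the
edge sequence of a walk in this multigraph. -/
inductive IsWalkSeq (ends : E → Sym2 V) : List V → List E → Prop
  | nil (v : V) : IsWalkSeq ends [v] []
  | cons {u v : V} {vs : List V} {e : E} {es : List E} :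
      ends e = s(u, v) → IsWalkSeq ends (v :: vs) es →
      IsWalkSeq ends (u :: v :: vs) (e :: es)

/-- There is a walk from `u` to `v` using only edges from `S`. -/
def HasWalk (ends : E → Sym2 V) (S : Set E) (u v : V) : Prop :=
  ∃ vs es, IsWalkSeq ends vs es ∧ vs.head? = some u ∧ vs.getLast? = some v ∧
    ∀ e ∈ es, e ∈ S

/-- A multigraph is `k`-edge-connected if it has at least two vertices and no
edge-cut of size less than `k`: removing fewer than `k` edges leaves all
vertices connected to each other. -/
def EdgeConnected [Fintype V] [Fintype E] (ends : E → Sym2 V) (k : ℕ) : Prop :=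
  2 ≤ Fintype.card V ∧
    ∀ F : Finset E, F.card < k → ∀ u v : V, HasWalk ends {e | e ∉ F} u v

/-- Two edges are neighbors if they share a common vertex. -/
def Neighbors (ends : E → Sym2 V) (e f : E) : Prop :=
  ∃ x, x ∈ ends e ∧ x ∈ ends f

/-- A (1,1)-edge-order through the (non-self-loop) edge `st` with endpoints
`s` and `t`: a (strict) total order `lt` on `E - {st}` such that `m ≥ 2`,
every edge not incident to `s` has a smaller neighbor and every edge not
incident to `t` has a larger neighbor. -/
def IsOneOneEdgeOrder [Fintype E] (ends : E → Sym2 V) (s t : V) (st : E)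
    (lt : E → E → Prop) : Prop :=
  2 ≤ Fintype.card E ∧
  (∀ e f, lt e f → e ≠ st ∧ f ≠ st) ∧
  (∀ e, ¬ lt e e) ∧
  (∀ e f g, lt e f → lt f g → lt e g) ∧
  (∀ e f, e ≠ st → f ≠ st → e ≠ f → lt e f ∨ lt f e) ∧
  (∀ e, e ≠ st → s ∉ ends e → ∃ f, Neighbors ends e f ∧ lt f e) ∧
  (∀ e, e ≠ st → t ∉ ends e → ∃ f, Neighbors ends e f ∧ lt e f)

/-- An ear: a subgraph given as the vertex sequence and edge sequence of a
walk (a path, or a cycle when the first and last vertices coincide). -/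
structure Ear (V E : Type) where
  verts : List V
  edges : List E

/-- An ear decomposition `(P₀, …, P_len)` of the multigraph given by `ends`:
a sequence of ears partitioning the edge set, where `P₀` is a cycle that is
not a self-loop, and each later ear is either a path intersecting the union
of the previous ears exactly in its two endpoints, or a cycle intersecting it
in a unique vertex. -/
structure EarDecomposition (ends : E → Sym2 V) where
  len : ℕ
  ears : Fin (len + 1) → Ear V E
  /-- every ear is a walk in the graph -/
  walk : ∀ i, IsWalkSeq ends (ears i).verts (ears i).edges
  /-- no ear repeats an edge -/
  edges_nodup : ∀ i, (ears i).edges.Nodup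
  /-- the ears partition the edge set -/
  partition : ∀ e : E, ∃! i, e ∈ (ears i).edges
  /-- the ears cover all vertices (their union is the whole graph) -/
  covers : ∀ v : V, ∃ i, v ∈ (ears i).verts
  /-- every ear contains at least one edge -/
  ear_nonempty : ∀ i, (ears i).edges ≠ []
  /-- `P₀` is a cycle … -/
  first_closed : (ears 0).verts.head? = (ears 0).verts.getLast?
  first_nodup : (ears 0).verts.tail.Nodup
  /-- … that is not a self-loop -/
  first_not_loop : 2 ≤ (ears 0).edges.length
  /-- every later ear is a path (distinct vertices) or a cycle (closed, with
  distinct vertices except for the repeated endpoint) -/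
  ear_path_or_cycle : ∀ i : Fin (len + 1), 0 < (i : ℕ) →
    (ears i).verts.Nodup ∨
      ((ears i).verts.head? = (ears i).verts.getLast? ∧ (ears i).verts.tail.Nodup)
  /-- the endpoint(s) of a later ear lie in the union of the previous ears -/
  ear_endpoints : ∀ i : Fin (len + 1), 0 < (i : ℕ) → ∀ x : V,
    ((ears i).verts.head? = some x ∨ (ears i).verts.getLast? = some x) →
      ∃ j, j < i ∧ x ∈ (ears j).verts
  /-- the inner vertices of a later ear avoid all previous ears -/
  ear_inner_new : ∀ i : Fin (len + 1), 0 < (i : ℕ) →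
    ∀ x ∈ (ears i).verts.tail.dropLast, ∀ j, j < i → x ∉ (ears j).verts

variable {ends : E → Sym2 V}

/-- The vertex set of `G_{i-1} = P₀ ∪ ⋯ ∪ P_{i-1}`. -/
def EarDecomposition.prevVerts (D : EarDecomposition ends) (i : Fin (D.len + 1)) : Set V :=
  {x | ∃ j, j < i ∧ x ∈ (D.ears j).verts}

/-- `inner(P_i)`, the set of inner vertices of the `i`-th ear. -/
def EarDecomposition.innerVerts (D : EarDecomposition ends) (i : Fin (D.len + 1)) : Set V :=
  {x | x ∈ (D.ears i).verts ∧ x ∉ D.prevVerts i}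

/-- The edge set `E - E_i` of `\overline{G_i}`. -/
def EarDecomposition.remEdges (D : EarDecomposition ends) (i : Fin (D.len + 1)) : Set E :=
  {e | ∃ j, i < j ∧ e ∈ (D.ears j).edges}

/-- `birth(e)`: the index of the unique ear containing the edge `e`. -/
noncomputable def EarDecomposition.birthE (D : EarDecomposition ends) (e : E) :
    Fin (D.len + 1) := (D.partition e).exists.choose

open Classical in
/-- `last(v)`: the maximal index `birth(vw)` over all edges `vw` incident to `v`. -/
noncomputable def EarDecomposition.lastV [Fintype E] (D : EarDecomposition ends) (v : V) : ℕ :=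
  (Finset.univ.filter fun e => v ∈ ends e).sup fun e => (D.birthE e : ℕ)

/-- The vertices of the subgraph induced by the edge set `S`. -/
def coverVerts (ends : E → Sym2 V) (S : Set E) : Set V :=
  {v | ∃ e ∈ S, v ∈ ends e}

/-- The subgraph induced by the edge set `S` is connected. -/
def ConnectedOn (ends : E → Sym2 V) (S : Set E) : Prop :=
  ∀ u ∈ coverVerts ends S, ∀ v ∈ coverVerts ends S, HasWalk ends S u v

/-- Definition 4.1: `D` is a (2,1)-edge-order through `rt` avoiding `ru`:
(1) `rt ∈ P₀`; (2) the last ear is the short ear `ru`; (3) non-separateness: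
for every `i < m - n`, `\overline{G_i}` contains all inner vertices of `P_i`
and, if `P_i` is short, at least one endpoint of `P_i`. -/
def IsTwoOneEdgeOrder (D : EarDecomposition ends) (rt ru : E) : Prop :=
  rt ∈ (D.ears 0).edges ∧
  (D.ears (Fin.last D.len)).edges = [ru] ∧
  ∀ i : Fin (D.len + 1), (i : ℕ) < D.len →
    (∀ x ∈ D.innerVerts i, x ∈ coverVerts ends (D.remEdges i)) ∧
    ((D.ears i).edges.length = 1 →
      ∃ x, ((D.ears i).verts.head? = some x ∨ (D.ears i).verts.getLast? = some x) ∧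
        x ∈ coverVerts ends (D.remEdges i))

open Classical in
/-- The degree of a vertex in a multigraph; self-loops count twice. -/
noncomputable def degree [Fintype E] (ends : E → Sym2 V) (v : V) : ℕ :=
  ∑ e : E, (if ends e = s(v, v) then 2 else if v ∈ ends e then 1 else 0)

/-- `T` is the edge set of a tree on the vertex set `W`: all its edges join
vertices of `W`, it connects any two vertices of `W`, and it contains no
nonempty closed trail (i.e. no cycle). -/
def IsTreeOn (ends : E → Sym2 V) (W : Set V) (T : Set E) : Prop :=
  (∀ e ∈ T, ∀ x, x ∈ ends e → x ∈ W) ∧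
  (∀ u ∈ W, ∀ v ∈ W, HasWalk ends T u v) ∧
  (∀ vs es, IsWalkSeq ends vs es → (∀ e ∈ es, e ∈ T) → es.Nodup →
    vs.head? = vs.getLast? → es = [])

/-- `T` is the edge set of a spanning tree of the whole multigraph. -/
def IsSpanningTree (ends : E → Sym2 V) (T : Set E) : Prop :=
  IsTreeOn ends Set.univ T

/-- `(vs, es)` is a (simple) path from `x` to `r` using only edges of `T`. -/
def IsPathIn (ends : E → Sym2 V) (T : Set E) (x r : V)
    (vs : List V) (es : List E) : Prop :=
  IsWalkSeq ends vs es ∧ vs.Nodup ∧ vs.head? = some x ∧ vs.getLast? = some r ∧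
    ∀ e ∈ es, e ∈ T

/-- The paths from `x` to the common root `r` inside `T₁` and inside `T₂` are
edge-disjoint. -/
def EdgeIndepFrom (ends : E → Sym2 V) (T₁ T₂ : Set E) (r x : V) : Prop :=
  ∀ vs₁ es₁ vs₂ es₂, IsPathIn ends T₁ x r vs₁ es₁ → IsPathIn ends T₂ x r vs₂ es₂ →
    ∀ e ∈ es₁, e ∉ es₂


variable {ends : E → Sym2 V}

theorem IsWalkSeq.ne_nil {vs es} (h : IsWalkSeq ends vs es) : vs ≠ [] := by
  cases h <;> simp

theorem IsWalkSeq.snoc {vs es v u e} (h : IsWalkSeq ends vs es)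
    (hl : vs.getLast? = some v) (he : ends e = s(v, u)) :
    IsWalkSeq ends (vs ++ [u]) (es ++ [e]) := by
  induction h with
  | nil w => simp at hl; subst hl; exact .cons he (.nil u)
  | cons h1 h2 ih =>
      rw [List.getLast?_cons_cons] at hl
      exact .cons h1 (ih hl)

theorem IsWalkSeq.reverse {vs es} (h : IsWalkSeq ends vs es) :
    IsWalkSeq ends vs.reverse es.reverse := by
  induction h with
  | nil v => exact .nil v
  | @cons u v vs e es h1 h2 ih =>
      have := ih.snoc (by rw [List.getLast?_reverse]; rfl) (e := e) (by rw [h1, Sym2.eq_swap])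
      simpa using this

theorem IsWalkSeq.glue {vs1 es1 vs2 es2 x} (h1 : IsWalkSeq ends vs1 es1)
    (hl : vs1.getLast? = some x) (h2 : IsWalkSeq ends (x :: vs2) es2) :
    IsWalkSeq ends (vs1 ++ vs2) (es1 ++ es2) := by
  induction h1 with
  | nil v => simp at hl; subst hl; simpa using h2
  | cons ha hb ih =>
      rw [List.getLast?_cons_cons] at hl
      exact .cons ha (ih hl)

theorem IsWalkSeq.split {vs es x} (h : IsWalkSeq ends vs es) (hx : x ∈ vs) :
    ∃ vs1 vs2 es1 es2, vs = vs1 ++ x :: vs2 ∧ es = es1 ++ es2 ∧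
      IsWalkSeq ends (vs1 ++ [x]) es1 ∧ IsWalkSeq ends (x :: vs2) es2 := by
  induction h with
  | nil v =>
      simp at hx; subst hx
      exact ⟨[], [], [], [], by simp, by simp, .nil x, .nil x⟩
  | @cons u v vs e es h1 h2 ih =>
      rcases List.mem_cons.1 hx with rfl | hx'
      · exact ⟨[], v :: vs, [], e :: es, by simp, by simp, .nil x, .cons h1 h2⟩
      · obtain ⟨vs1, vs2, es1, es2, hv, he, w1, w2⟩ := ih hx'
        refine ⟨u :: vs1, vs2, e :: es1, es2, by simp [hv], by simp [he], ?_, w2⟩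
        cases vs1 with
        | nil =>
            simp at hv
            exact .cons (hv.1 ▸ h1) w1
        | cons a t =>
            simp at hv
            exact .cons (hv.1 ▸ h1) w1

theorem IsWalkSeq.edge_mem_verts {vs es e} (h : IsWalkSeq ends vs es)
    (he : e ∈ es) : ∀ x ∈ ends e, x ∈ vs := by
  induction h with
  | nil v => simp at he
  | @cons u v vs e' es h1 h2 ih =>
      intro x hx
      rcases List.mem_cons.1 he with rfl | he'
      · rw [h1] at hx
        rcases Sym2.mem_iff.1 hx with rfl | rfl <;> simp
      · exact List.mem_cons_of_mem _ (ih he' x hx)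

theorem IsWalkSeq.edge_endpoint_dropLast {vs es} (h : IsWalkSeq ends vs es) :
    ∀ f ∈ es, ∃ w, w ∈ ends f ∧ w ∈ vs.dropLast := by
  induction h with
  | nil v => simp
  | @cons u v vs e es h1 h2 ih =>
      intro f hf
      rcases List.mem_cons.1 hf with rfl | hf'
      · exact ⟨u, by rw [h1]; exact Sym2.mem_mk_left u v, by simp⟩
      · obtain ⟨w, hw1, hw2⟩ := ih f hf'
        refine ⟨w, hw1, ?_⟩
        rw [List.dropLast_cons_of_ne_nil (by exact h2.ne_nil)]
        exact List.mem_cons_of_mem _ hw2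

theorem IsWalkSeq.vert_incident {vs es v} (h : IsWalkSeq ends vs es)
    (hes : es ≠ []) (hv : v ∈ vs) : ∃ e ∈ es, v ∈ ends e := by
  induction h with
  | nil w => simp at hes
  | @cons u v' vs e es h1 h2 ih =>
      rcases List.mem_cons.1 hv with rfl | hv'
      · exact ⟨e, by simp, by rw [h1]; exact Sym2.mem_mk_left _ _⟩
      · cases es with
        | nil =>
            cases h2 with
            | nil => simp at hv'; subst hv'
                     exact ⟨e, by simp, by rw [h1]; exact Sym2.mem_mk_right _ _⟩
        | cons f fs =>
            obtain ⟨g, hg1, hg2⟩ := ih (by simp) hv'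
            exact ⟨g, List.mem_cons_of_mem _ hg1, hg2⟩

theorem IsWalkSeq.last_edge {vs es z} (h : IsWalkSeq ends vs es)
    (hz : vs.getLast? = some z) (hes : es ≠ []) :
    ∃ w f, f ∈ es ∧ ends f = s(w, z) ∧ w ∈ vs.dropLast := by
  induction h with
  | nil v => simp at hes
  | @cons u v vs e es h1 h2 ih =>
      cases es with
      | nil =>
          cases h2 with
          | nil =>
              simp at hz; subst hz
              exact ⟨u, e, by simp, h1, by simp⟩
      | cons f fs =>
          rw [List.getLast?_cons_cons] at hz
          obtain ⟨w, g, hg1, hg2, hg3⟩ := ih hz (by simp)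
          refine ⟨w, g, List.mem_cons_of_mem _ hg1, hg2, ?_⟩
          rw [List.dropLast_cons_of_ne_nil (by exact h2.ne_nil)]
          exact List.mem_cons_of_mem _ hg3

theorem IsWalkSeq.nodup_edges {vs es} (h : IsWalkSeq ends vs es)
    (hn : vs.Nodup) : es.Nodup := by
  induction h with
  | nil v => simp
  | @cons u v vs e es h1 h2 ih =>
      rw [List.nodup_cons] at hn
      refine List.nodup_cons.2 ⟨fun he => ?_, ih hn.2⟩
      exact hn.1 (h2.edge_mem_verts he u (by rw [h1]; exact Sym2.mem_mk_left _ _))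

theorem IsWalkSeq.toPath {vs es} (h : IsWalkSeq ends vs es) :
    ∃ vs' es', IsWalkSeq ends vs' es' ∧ vs'.head? = vs.head? ∧
      vs'.getLast? = vs.getLast? ∧ vs'.Nodup ∧
      (∀ v ∈ vs', v ∈ vs) ∧ (∀ e ∈ es', e ∈ es) := by
  induction h with
  | nil v => exact ⟨[v], [], .nil v, rfl, rfl, by simp, by simp, by simp⟩
  | @cons u v vs e es h1 h2 ih =>
      obtain ⟨vs', es', w, hh, hl, hn, hvsub, hesub⟩ := ih
      by_cases hu : u ∈ vs'
      · obtain ⟨vs1, vs2, es1, es2, hveq, heeq, w1, w2⟩ := w.split hu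
        refine ⟨u :: vs2, es2, w2, by simp, ?_, ?_, ?_, ?_⟩
        · have : vs'.getLast? = (u :: vs2).getLast? := by
            rw [hveq]; exact List.getLast?_append_of_ne_nil vs1 (l₂ := u :: vs2) (by simp)
          rw [← this, hl]; simp
        · have := hn
          rw [hveq] at this
          exact (List.Nodup.of_append_right this)
        · intro x hx
          have : x ∈ vs' := by rw [hveq]; exact List.mem_append_right _ hx
          exact List.mem_cons_of_mem _ (hvsub x this)
        · intro f hf
          have : f ∈ es' := by rw [heeq]; exact List.mem_append_right _ hf
          exact List.mem_cons_of_mem _ (hesub f this)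
      · cases vs' with
        | nil => exact absurd w.ne_nil (by simp)
        | cons a t =>
            simp at hh; subst hh
            refine ⟨u :: a :: t, e :: es', .cons h1 w, rfl, ?_, ?_, ?_, ?_⟩
            · simp only [List.getLast?_cons_cons] at hl ⊢; exact hl
            · exact List.nodup_cons.2 ⟨hu, hn⟩
            · intro x hx
              rcases List.mem_cons.1 hx with rfl | hx'
              · simp
              · exact List.mem_cons_of_mem _ (hvsub x hx')
            · intro f hf
              rcases List.mem_cons.1 hf with rfl | hf'
              · simp
              · exact List.mem_cons_of_mem _ (hesub f hf')

/-- Truncate a walk at the first vertex belonging to `C`. -/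

theorem IsWalkSeq.truncate {vs es c} (C : Set V) (h : IsWalkSeq ends vs es)
    (hl : vs.getLast? = some c) (hc : c ∈ C) :
    ∃ vs' es' z, IsWalkSeq ends vs' es' ∧ vs'.head? = vs.head? ∧
      vs'.getLast? = some z ∧ z ∈ C ∧ (∀ x ∈ vs'.dropLast, x ∉ C) ∧
      vs' <+: vs ∧ es' <+: es := by
  induction h with
  | nil v =>
      simp at hl; subst hl
      exact ⟨[v], [], v, .nil v, rfl, rfl, hc, by simp, List.prefix_refl _, List.prefix_refl _⟩
  | @cons u v vs e es h1 h2 ih =>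
      by_cases hu : u ∈ C
      · exact ⟨[u], [], u, .nil u, rfl, rfl, hu, by simp, ⟨v :: vs, rfl⟩, ⟨e :: es, rfl⟩⟩
      · rw [List.getLast?_cons_cons] at hl
        obtain ⟨vs', es', z, w, hh, hzl, hz, hdrop, hpre, hepre⟩ := ih hl
        cases vs' with
        | nil => exact absurd w.ne_nil (by simp)
        | cons a t =>
            simp at hh; subst hh
            refine ⟨u :: a :: t, e :: es', z, .cons h1 w, rfl, ?_, hz, ?_, ?_, ?_⟩
            · simp only [List.getLast?_cons_cons] at hzl ⊢; exact hzl
            · intro x hx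
              rw [List.dropLast_cons_of_ne_nil (by simp)] at hx
              rcases List.mem_cons.1 hx with rfl | hx'
              · exact hu
              · exact hdrop x hx'
            · exact (List.prefix_cons_inj u).2 hpre
            · exact (List.prefix_cons_inj e).2 hepre

theorem HasWalk.refl (S : Set E) (u : V) : HasWalk ends S u u :=
  ⟨[u], [], .nil u, rfl, rfl, by simp⟩

theorem HasWalk.symm {S : Set E} {u v : V} (h : HasWalk ends S u v) :
    HasWalk ends S v u := by
  obtain ⟨vs, es, w, hh, hl, hs⟩ := h
  exact ⟨vs.reverse, es.reverse, w.reverse, by rwa [List.head?_reverse],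
    by rwa [List.getLast?_reverse], fun e he => hs e (List.mem_reverse.1 he)⟩

theorem HasWalk.trans {S : Set E} {u v w : V} (h1 : HasWalk ends S u v)
    (h2 : HasWalk ends S v w) : HasWalk ends S u w := by
  obtain ⟨vs1, es1, w1, hh1, hl1, hs1⟩ := h1
  obtain ⟨vs2, es2, w2, hh2, hl2, hs2⟩ := h2
  cases vs2 with
  | nil => exact absurd w2.ne_nil (by simp)
  | cons a t =>
      simp at hh2; subst hh2
      refine ⟨vs1 ++ t, es1 ++ es2, w1.glue hl1 w2, ?_, ?_, ?_⟩
      · cases vs1 with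
        | nil => exact absurd w1.ne_nil (by simp)
        | cons b s => simpa using hh1
      · cases t with
        | nil =>
            simp at hl2; subst hl2
            simpa using hl1
        | cons c r =>
            rw [List.getLast?_append_of_ne_nil _ (l₂ := c :: r) (by simp)]
            simpa using hl2
      · intro e he
        rcases List.mem_append.1 he with h | h
        · exact hs1 e h
        · exact hs2 e h

theorem HasWalk.mono {S S' : Set E} (hss : S ⊆ S') {u v : V}
    (h : HasWalk ends S u v) : HasWalk ends S' u v := by
  obtain ⟨vs, es, w, hh, hl, hs⟩ := h
  exact ⟨vs, es, w, hh, hl, fun e he => hss (hs e he)⟩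

/-- From any vertex on a walk with no repeated edges, after deleting one edge

`f` one can still reach the first or the last vertex of the walk. -/

theorem IsWalkSeq.route {vs es x hu hv} (h : IsWalkSeq ends vs es)
    (hx : x ∈ vs) (hnd : es.Nodup) (f : E)
    (hh : vs.head? = some hu) (hl : vs.getLast? = some hv) :
    HasWalk ends {e | e ∈ es ∧ e ≠ f} x hu ∨
      HasWalk ends {e | e ∈ es ∧ e ≠ f} x hv := by
  obtain ⟨vs1, vs2, es1, es2, hveq, heeq, w1, w2⟩ := h.split hx
  subst hveq heeq
  by_cases hf : f ∈ es1
  · right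
    refine ⟨x :: vs2, es2, w2, rfl, ?_, ?_⟩
    · rw [List.getLast?_append_of_ne_nil _ (l₂ := x :: vs2) (by simp)] at hl
      exact hl
    · intro e he
      refine ⟨List.mem_append_right _ he, fun hef => ?_⟩
      subst hef
      exact (List.disjoint_of_nodup_append hnd) hf he
  · left
    refine HasWalk.symm ⟨vs1 ++ [x], es1, w1, ?_, by simp, ?_⟩
    · cases vs1 with
      | nil => simpa using hh
      | cons b s => simpa using hh
    · intro e he
      exact ⟨List.mem_append_left _ he, fun hef => hf (hef ▸ he)⟩

theorem IsWalkSeq.length_eq {vs es} (h : IsWalkSeq ends vs es) :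
    vs.length = es.length + 1 := by
  induction h with
  | nil v => rfl
  | cons _ _ ih => simp at ih ⊢; omega

theorem backward [Fintype V] [Fintype E] {ends : E → Sym2 V}
    (D : EarDecomposition ends) : EdgeConnected ends 2 := by
  classical
  -- the head vertex of ear 0
  obtain ⟨v0, t0, hv0⟩ : ∃ a t, (D.ears 0).verts = a :: t := by
    cases h : (D.ears 0).verts with
    | nil => exact absurd ((D.walk 0).ne_nil) (by simp [h])
    | cons a t => exact ⟨a, t, rfl⟩
  constructor
  · -- at least 2 vertices
    have hlen : (D.ears 0).verts.length = (D.ears 0).edges.length + 1 :=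
      (D.walk 0).length_eq
    have h3 : 3 ≤ (D.ears 0).verts.length := by
      have := D.first_not_loop; omega
    rw [hv0] at h3
    cases t0 with
    | nil => simp at h3
    | cons b s =>
        cases s with
        | nil => simp at h3
        | cons c r =>
            have hnd := D.first_nodup
            rw [hv0] at hnd
            simp at hnd
            exact Fintype.one_lt_card_iff.2 ⟨b, c, hnd.1.1⟩
  · intro F hF u v
    set S : Set E := {e | e ∉ F} with hS
    -- F ⊆ {f} for some f
    have hE : Nonempty E := by
      cases h : (D.ears 0).edges with
      | nil => exact absurd h (D.ear_nonempty 0)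
      | cons e es => exact ⟨e⟩
    obtain ⟨f, hf⟩ : ∃ f : E, ∀ e ∈ F, e = f := by
      rcases Finset.card_le_one.1 (by omega : F.card ≤ 1) with h
      cases hE with
      | intro e0 =>
          by_cases hne : F.Nonempty
          · obtain ⟨a, ha⟩ := hne
            exact ⟨a, fun e he => h e he a ha⟩
          · exact ⟨e0, fun e he => absurd ⟨e, he⟩ hne⟩
    have hsub : ∀ i, {e | e ∈ (D.ears i).edges ∧ e ≠ f} ⊆ S := by
      intro i e he hmem
      exact he.2 (hf e hmem)
    -- every vertex of every ear connects to v0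
    have key : ∀ n : ℕ, ∀ i : Fin (D.len + 1), (i : ℕ) = n →
        ∀ x ∈ (D.ears i).verts, HasWalk ends S x v0 := by
      intro n
      induction n using Nat.strong_induction_on with
      | _ n ih =>
          intro i hi x hx
          obtain ⟨hu, hhu⟩ : ∃ a, (D.ears i).verts.head? = some a := by
            cases h : (D.ears i).verts with
            | nil => exact absurd (D.walk i).ne_nil (by simp [h])
            | cons a t => exact ⟨a, rfl⟩
          obtain ⟨hv, hhv⟩ : ∃ a, (D.ears i).verts.getLast? = some a := by
            have := (D.walk i).ne_nil
            rcases Option.isSome_iff_exists.1 (List.getLast?_isSome.2 this) with ⟨a, ha⟩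
            exact ⟨a, ha⟩
          have hroute := (D.walk i).route hx (D.edges_nodup i) f hhu hhv
          by_cases hi0 : (i : ℕ) = 0
          · -- ear 0: head = last = v0
            have hieq : i = 0 := Fin.ext hi0
            subst hieq
            have hv0h : hu = v0 := by rw [hv0] at hhu; exact (by simpa using hhu : v0 = hu).symm
            have hv0l : hv = v0 := by
              rw [D.first_closed.symm] at hhv
              rw [hv0] at hhv; exact (by simpa using hhv : v0 = hv).symm
            rcases hroute with h | h
            · exact (h.mono (hsub 0)).symm.symm |>.trans (hv0h ▸ HasWalk.refl S hu)
            · exact (h.mono (hsub 0)).trans (hv0l ▸ HasWalk.refl S hv)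
          · -- later ear
            have hipos : 0 < (i : ℕ) := Nat.pos_of_ne_zero hi0
            rcases hroute with h | h
            · obtain ⟨j, hj, hxj⟩ := D.ear_endpoints i hipos hu (Or.inl hhu)
              have : HasWalk ends S hu v0 := ih j (by omega : (j:ℕ) < n) j rfl hu hxj
              exact (h.mono (hsub i)).trans this
            · obtain ⟨j, hj, hxj⟩ := D.ear_endpoints i hipos hv (Or.inr hhv)
              have : HasWalk ends S hv v0 := ih j (by omega : (j:ℕ) < n) j rfl hv hxj
              exact (h.mono (hsub i)).trans this
    obtain ⟨iu, hiu⟩ := D.covers u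
    obtain ⟨iv, hiv⟩ := D.covers v
    exact (key _ iu rfl u hiu).trans (key _ iv rfl v hiv).symm

/-- A partial ear decomposition covering the edge set `S`. -/

structure PD (ends : E → Sym2 V) (S : Set E) where
  len : ℕ
  ears : Fin (len + 1) → Ear V E
  walk : ∀ i, IsWalkSeq ends (ears i).verts (ears i).edges
  edges_nodup : ∀ i, (ears i).edges.Nodup
  mem_S : ∀ i, ∀ e ∈ (ears i).edges, e ∈ S
  partition : ∀ e ∈ S, ∃! i, e ∈ (ears i).edges
  ear_nonempty : ∀ i, (ears i).edges ≠ []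
  first_closed : (ears 0).verts.head? = (ears 0).verts.getLast?
  first_nodup : (ears 0).verts.tail.Nodup
  first_not_loop : 2 ≤ (ears 0).edges.length
  ear_path_or_cycle : ∀ i : Fin (len + 1), 0 < (i : ℕ) →
    (ears i).verts.Nodup ∨
      ((ears i).verts.head? = (ears i).verts.getLast? ∧ (ears i).verts.tail.Nodup)
  ear_endpoints : ∀ i : Fin (len + 1), 0 < (i : ℕ) → ∀ x : V,
    ((ears i).verts.head? = some x ∨ (ears i).verts.getLast? = some x) →
      ∃ j, j < i ∧ x ∈ (ears j).verts
  ear_inner_new : ∀ i : Fin (len + 1), 0 < (i : ℕ) →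
    ∀ x ∈ (ears i).verts.tail.dropLast, ∀ j, j < i → x ∉ (ears j).verts

variable {S : Set E}

theorem PD.vert_covered (P : PD ends S) {i v} (hv : v ∈ (P.ears i).verts) :
    v ∈ coverVerts ends S := by
  obtain ⟨e, he, hve⟩ := (P.walk i).vert_incident (P.ear_nonempty i) hv
  exact ⟨e, P.mem_S i e he, hve⟩

theorem PD.covered_in_ear (P : PD ends S) {v} (hv : v ∈ coverVerts ends S) :
    ∃ i, v ∈ (P.ears i).verts := by
  obtain ⟨e, he, hve⟩ := hv
  obtain ⟨i, hi, -⟩ := P.partition e he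
  exact ⟨i, (P.walk i).edge_mem_verts hi v hve⟩

theorem PD.S_endpoints_covered (P : PD ends S) {e} (he : e ∈ S) :
    ∀ x ∈ ends e, x ∈ coverVerts ends S := fun x hx => ⟨e, he, hx⟩

/-- Extend a partial decomposition by one ear. -/

theorem PD.extend (P : PD ends S) (N : Ear V E)
    (hw : IsWalkSeq ends N.verts N.edges)
    (hnd : N.edges.Nodup)
    (hne : N.edges ≠ [])
    (hnewS : ∀ e ∈ N.edges, e ∉ S)
    (hpc : N.verts.Nodup ∨ (N.verts.head? = N.verts.getLast? ∧ N.verts.tail.Nodup))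
    (hend : ∀ x : V, (N.verts.head? = some x ∨ N.verts.getLast? = some x) →
      x ∈ coverVerts ends S)
    (hinner : ∀ x ∈ N.verts.tail.dropLast, x ∉ coverVerts ends S) :
    Nonempty (PD ends (S ∪ {e | e ∈ N.edges})) := by
  classical
  set S' := S ∪ {e | e ∈ N.edges} with hS'
  refine ⟨⟨P.len + 1, Fin.snoc P.ears N, ?_, ?_, ?_, ?_, ?_, ?_, ?_, ?_, ?_, ?_, ?_⟩⟩
  · intro i
    induction i using Fin.lastCases with
    | last => simpa [Fin.snoc_last] using hw
    | cast j => simpa [Fin.snoc_castSucc] using P.walk j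
  · intro i
    induction i using Fin.lastCases with
    | last => simpa [Fin.snoc_last] using hnd
    | cast j => simpa [Fin.snoc_castSucc] using P.edges_nodup j
  · intro i e he
    induction i using Fin.lastCases with
    | last => right; simpa [Fin.snoc_last] using he
    | cast j => left; exact P.mem_S j e (by simpa [Fin.snoc_castSucc] using he)
  · intro e he
    rcases he with he | he
    · obtain ⟨i, hi, hiu⟩ := P.partition e he
      refine ⟨Fin.castSucc i, by simpa [Fin.snoc_castSucc] using hi, ?_⟩
      intro j hj
      induction j using Fin.lastCases with
      | last =>
          rw [Fin.snoc_last] at hj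
          exact absurd he (hnewS e hj)
      | cast k =>
          rw [Fin.snoc_castSucc] at hj
          exact congrArg Fin.castSucc (hiu k hj)
    · refine ⟨Fin.last _, by simpa [Fin.snoc_last] using he, ?_⟩
      intro j hj
      induction j using Fin.lastCases with
      | last => rfl
      | cast k =>
          rw [Fin.snoc_castSucc] at hj
          exact absurd (P.mem_S k e hj) (hnewS e he)
  · intro i
    induction i using Fin.lastCases with
    | last => simpa [Fin.snoc_last] using hne
    | cast j => simpa [Fin.snoc_castSucc] using P.ear_nonempty j
  · have h0 : (Fin.snoc P.ears N : Fin (P.len + 1 + 1) → Ear V E) 0 = P.ears 0 := by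
      rw [← Fin.castSucc_zero, Fin.snoc_castSucc]
    rw [h0]; exact P.first_closed
  · have h0 : (Fin.snoc P.ears N : Fin (P.len + 1 + 1) → Ear V E) 0 = P.ears 0 := by
      rw [← Fin.castSucc_zero, Fin.snoc_castSucc]
    rw [h0]; exact P.first_nodup
  · have h0 : (Fin.snoc P.ears N : Fin (P.len + 1 + 1) → Ear V E) 0 = P.ears 0 := by
      rw [← Fin.castSucc_zero, Fin.snoc_castSucc]
    rw [h0]; exact P.first_not_loop
  · intro i hi
    induction i using Fin.lastCases with
    | last => rw [Fin.snoc_last]; exact hpc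
    | cast j =>
        rw [Fin.snoc_castSucc]
        exact P.ear_path_or_cycle j (by simpa using hi)
  · intro i hi x hx
    induction i using Fin.lastCases with
    | last =>
        rw [Fin.snoc_last] at hx
        obtain ⟨k, hk⟩ := P.covered_in_ear (hend x hx)
        exact ⟨Fin.castSucc k, Fin.castSucc_lt_last k, by simpa [Fin.snoc_castSucc] using hk⟩
    | cast j =>
        rw [Fin.snoc_castSucc] at hx
        obtain ⟨k, hk, hxk⟩ := P.ear_endpoints j (by simpa using hi) x hx
        exact ⟨Fin.castSucc k, by simpa [Fin.castSucc_lt_castSucc_iff] using hk,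
          by simpa [Fin.snoc_castSucc] using hxk⟩
  · intro i hi x hx j hj
    induction i using Fin.lastCases with
    | last =>
        rw [Fin.snoc_last] at hx
        induction j using Fin.lastCases with
        | last => exact absurd hj (lt_irrefl _)
        | cast k =>
            rw [Fin.snoc_castSucc]
            intro hmem
            exact hinner x hx (P.vert_covered hmem)
    | cast j' =>
        rw [Fin.snoc_castSucc] at hx
        induction j using Fin.lastCases with
        | last =>
            exact absurd hj (by simp [Fin.lt_def, Fin.val_last])
        | cast k =>
            rw [Fin.snoc_castSucc]
            exact P.ear_inner_new j' (by simpa using hi) x hx k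
              (by simpa [Fin.castSucc_lt_castSucc_iff] using hj)

theorem mem_split_last {l : List V} {z x : V} (hz : l.getLast? = some z)
    (hx : x ∈ l) : x ∈ l.dropLast ∨ x = z := by
  have hne : l ≠ [] := by rintro rfl; simp at hz
  have heq : l.dropLast ++ [l.getLast hne] = l := List.dropLast_append_getLast hne
  have hzz : l.getLast hne = z := by
    rw [List.getLast?_eq_getLast hne] at hz; simpa using hz
  rw [← heq] at hx
  rcases List.mem_append.1 hx with h | h
  · exact Or.inl h
  · right; simp at h; rw [h, hzz]

theorem sym2_exists (z : Sym2 V) : ∃ a b, z = s(a, b) :=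
  Sym2.ind (fun a b => ⟨a, b, rfl⟩) z

/-- Build a new ear through an uncovered edge `f` with covered endpoint `x`. -/

theorem build_ear [Fintype V] [Fintype E] (hc : EdgeConnected ends 2)
    {S : Set E} {f : E} {x : V} (hf : f ∉ S) (hx : x ∈ ends f)
    (hxC : x ∈ coverVerts ends S)
    (hScov : ∀ e ∈ S, ∀ w ∈ ends e, w ∈ coverVerts ends S) :
    ∃ N : Ear V E, f ∈ N.edges ∧
      IsWalkSeq ends N.verts N.edges ∧ N.edges.Nodup ∧ N.edges ≠ [] ∧
      (∀ e ∈ N.edges, e ∉ S) ∧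
      (N.verts.Nodup ∨ (N.verts.head? = N.verts.getLast? ∧ N.verts.tail.Nodup)) ∧
      (∀ y : V, (N.verts.head? = some y ∨ N.verts.getLast? = some y) →
        y ∈ coverVerts ends S) ∧
      (∀ y ∈ N.verts.tail.dropLast, y ∉ coverVerts ends S) := by
  classical
  obtain ⟨y, hy⟩ := (Sym2.mem_iff_exists).1 hx
  by_cases hyx : y = x
  · -- self-loop
    subst hyx
    refine ⟨⟨[y, y], [f]⟩, by simp, .cons hy (.nil y), by simp, by simp,
      by simpa using hf, Or.inr ⟨by simp, by simp⟩, ?_, by simp⟩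
    intro z hz
    simp at hz
    rcases hz with rfl | rfl <;> exact hxC
  by_cases hyC : y ∈ coverVerts ends S
  · -- both endpoints covered
    refine ⟨⟨[x, y], [f]⟩, by simp, .cons hy (.nil y), by simp, by simp,
      by simpa using hf, Or.inl (by simp [Ne.symm hyx]), ?_, by simp⟩
    intro z hz
    simp at hz
    rcases hz with rfl | rfl
    exacts [hxC, hyC]
  · -- walk from y back to the covered set, avoiding f
    obtain ⟨vs, es, w, hh, hl, hsF⟩ :=
      hc.2 {f} (by simp) y x
    obtain ⟨vs1, es1, w1, hh1, hl1, hnd1, -, hes1⟩ := w.toPath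
    rw [hh] at hh1; rw [hl] at hl1
    obtain ⟨vs2, es2, z, w2, hh2, hl2, hzC, hdrop, hpre, hepre⟩ :=
      w1.truncate (coverVerts ends S) hl1 hxC
    rw [hh1] at hh2
    have hnd2 : vs2.Nodup := hnd1.sublist hpre.sublist
    have hes2 : ∀ e ∈ es2, e ≠ f := by
      intro e he
      have : e ∈ es := hes1 e (hepre.sublist.mem he)
      have := hsF e this
      simpa using this
    have hes2S : ∀ e ∈ es2, e ∉ S := by
      intro e he heS
      obtain ⟨w', hw1, hw2⟩ := w2.edge_endpoint_dropLast e he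
      exact hdrop w' hw2 (hScov e heS w' hw1)
    cases vs2 with
    | nil => exact absurd w2.ne_nil (by simp)
    | cons b t =>
        simp at hh2; subst hh2
        have hwN : IsWalkSeq ends (x :: b :: t) (f :: es2) := .cons hy w2
        have hlN : (x :: b :: t).getLast? = some z := by
          rw [List.getLast?_cons_cons]; exact hl2
        refine ⟨⟨x :: b :: t, f :: es2⟩, by simp, hwN, ?_, by simp, ?_, ?_, ?_, ?_⟩
        · refine List.nodup_cons.2 ⟨fun hmem => (hes2 f hmem) rfl, w2.nodup_edges hnd2⟩
        · intro e he
          rcases List.mem_cons.1 he with rfl | he'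
          · exact hf
          · exact hes2S e he'
        · by_cases hzx : z = x
          · refine Or.inr ⟨?_, by simpa using hnd2⟩
            show (x :: b :: t).head? = ({ verts := x :: b :: t, edges := f :: es2 } : Ear V E).verts.getLast?
            rw [show ({ verts := x :: b :: t, edges := f :: es2 } : Ear V E).verts.getLast? = some z from hlN, hzx]
            simp
          · refine Or.inl (List.nodup_cons.2 ⟨fun hmem => ?_, hnd2⟩)
            rcases mem_split_last hl2 hmem with h | h
            · exact hdrop x h hxC
            · exact hzx h.symm
        · intro y' hy'
          rcases hy' with h | h
          · simp at h; subst h; exact hxC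
          · rw [hlN] at h
            simp at h; subst h; exact hzC
        · intro y' hy'
          simp only [List.tail_cons] at hy'
          exact hdrop y' hy'

/-- If some edge is uncovered, there is an uncovered edge with a covered endpoint. -/

theorem PD.find [Fintype V] [Fintype E] (hc : EdgeConnected ends 2)
    {S : Set E} (P : PD ends S) {e : E} (he : e ∉ S) :
    ∃ f x, f ∉ S ∧ x ∈ ends f ∧ x ∈ coverVerts ends S := by
  classical
  -- the covered set is nonempty
  obtain ⟨e0, he0⟩ : ∃ e0, e0 ∈ S := by
    cases h : (P.ears 0).edges with
    | nil => exact absurd h (P.ear_nonempty 0)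
    | cons a l => exact ⟨a, P.mem_S 0 a (by simp [h])⟩
  obtain ⟨c0, hc0⟩ : ∃ c, c ∈ coverVerts ends S := by
    obtain ⟨a, b, hab⟩ := sym2_exists (ends e0)
    exact ⟨a, e0, he0, by rw [hab]; exact Sym2.mem_mk_left a b⟩
  obtain ⟨a, b, hab⟩ := sym2_exists (ends e)
  by_cases haC : a ∈ coverVerts ends S
  · exact ⟨e, a, he, by rw [hab]; exact Sym2.mem_mk_left a b, haC⟩
  by_cases hbC : b ∈ coverVerts ends S
  · exact ⟨e, b, he, by rw [hab]; exact Sym2.mem_mk_right a b, hbC⟩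
  · -- walk from a to the covered set
    obtain ⟨vs, es, w, hh, hl, -⟩ := hc.2 ∅ (by simp) a c0
    obtain ⟨vs', es', z, w', hh', hl', hzC, hdrop, -, -⟩ :=
      w.truncate (coverVerts ends S) hl hc0
    rw [hh] at hh'
    have hvs2 : 2 ≤ vs'.length := by
      rcases vs' with _ | ⟨p, _ | ⟨q, r⟩⟩
      · exact absurd w'.ne_nil (by simp)
      · exfalso
        have h1 : p = a := by simpa using hh'
        have h2 : p = z := by simpa using hl'
        exact haC (by rw [h1.symm.trans h2]; exact hzC)
      · simp
    have hes' : es' ≠ [] := by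
      have := w'.length_eq
      intro h; rw [h] at this; simp at this; omega
    obtain ⟨w0, g, hg1, hg2, hg3⟩ := w'.last_edge hl' hes'
    have hw0C : w0 ∉ coverVerts ends S := hdrop w0 hg3
    refine ⟨g, z, fun hgS => hw0C ⟨g, hgS, by rw [hg2]; exact Sym2.mem_mk_left _ _⟩,
      by rw [hg2]; exact Sym2.mem_mk_right _ _, hzC⟩

/-- The initial partial decomposition: one cycle. -/

theorem PD.initial [Fintype V] [Fintype E] (hc : EdgeConnected ends 2) :
    ∃ S : Set E, Nonempty (PD ends S) := by
  classical
  obtain ⟨u, v, huv⟩ := Fintype.one_lt_card_iff.1 hc.1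
  obtain ⟨vs, es, w, hh, hl, -⟩ := hc.2 ∅ (by simp) u v
  obtain ⟨vs1, es1, w1, hh1, hl1, hnd1, -, -⟩ := w.toPath
  rw [hh] at hh1; rw [hl] at hl1
  rcases vs1 with _ | ⟨a, _ | ⟨b, t⟩⟩
  · exact absurd w1.ne_nil (by simp)
  · exfalso
    simp at hh1 hl1
    exact huv (hh1.symm.trans hl1)
  · cases w1 with
    | @cons _ _ _ e0 es0 he0 w1' =>
        have hab2 : a ≠ b := by
          intro h
          exact (List.nodup_cons.1 hnd1).1 (h ▸ (List.mem_cons_self : b ∈ b :: t))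
        obtain ⟨vsw, esw, ww, hhw, hlw, hsw⟩ := hc.2 {e0} (by simp) b a
        obtain ⟨vs2, es2, w2, hh2, hl2, hnd2, -, hes2⟩ := ww.toPath
        rw [hhw] at hh2; rw [hlw] at hl2
        rcases vs2 with _ | ⟨b', t2⟩
        · exact absurd w2.ne_nil (by simp)
        · have hb' : b' = b := by simpa using hh2
          subst hb'
          have ht2 : t2 ≠ [] := by
            rintro rfl
            simp at hl2
            exact hab2 hl2.symm
          have hes2ne : es2 ≠ [] := by
            have := w2.length_eq
            rintro rfl
            simp at this
            exact ht2 this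
          have he0nmem : e0 ∉ es2 := by
            intro h
            have := hsw e0 (hes2 e0 h)
            simp at this
          refine ⟨{f | f ∈ e0 :: es2}, ⟨⟨0, fun _ => ⟨a :: b' :: t2, e0 :: es2⟩,
            ?_, ?_, ?_, ?_, ?_, ?_, ?_, ?_, ?_, ?_, ?_⟩⟩⟩
          · intro i
            exact .cons he0 w2
          · intro i
            exact List.nodup_cons.2 ⟨he0nmem, w2.nodup_edges hnd2⟩
          · intro i f hf
            exact hf
          · intro f hf
            exact ⟨0, hf, fun j _ => Fin.ext (by have := j.isLt; omega)⟩
          · intro i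
            simp
          · show (a :: b' :: t2).head? = (a :: b' :: t2).getLast?
            rw [List.getLast?_cons_cons, hl2]
            simp
          · exact hnd2
          · show 2 ≤ (e0 :: es2).length
            cases es2 with
            | nil => exact absurd rfl hes2ne
            | cons q r => simp
          · intro i hi
            exact absurd hi (by have := i.isLt; omega)
          · intro i hi
            exact absurd hi (by have := i.isLt; omega)
          · intro i hi
            exact absurd hi (by have := i.isLt; omega)

/-- Upgrade a full partial decomposition to an ear decomposition. -/

theorem PD.toEarDecomposition [Fintype V] [Fintype E] {S : Set E}
    (hc : EdgeConnected ends 2) (P : PD ends S) (hall : ∀ e : E, e ∈ S) :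
    Nonempty (EarDecomposition ends) := by
  refine ⟨⟨P.len, P.ears, P.walk, P.edges_nodup, fun e => P.partition e (hall e),
    ?_, P.ear_nonempty, P.first_closed, P.first_nodup, P.first_not_loop,
    P.ear_path_or_cycle, P.ear_endpoints, P.ear_inner_new⟩⟩
  intro v
  obtain ⟨u, hu⟩ := Fintype.exists_ne_of_one_lt_card hc.1 v
  obtain ⟨vs, es, w, hh, hl, -⟩ := hc.2 ∅ (by simp) v u
  rcases vs with _ | ⟨a, _ | ⟨b, t⟩⟩
  · exact absurd w.ne_nil (by simp)
  · exfalso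
    have h1 : a = v := by simpa using hh
    have h2 : a = u := by simpa using hl
    exact hu ((h1.symm.trans h2).symm)
  · have hav : a = v := by simpa using hh
    cases w with
    | @cons _ _ _ e1 es1 he1 w' =>
        obtain ⟨i, hi, -⟩ := P.partition e1 (hall e1)
        refine ⟨i, (P.walk i).edge_mem_verts hi v ?_⟩
        rw [he1, hav]
        exact Sym2.mem_mk_left _ _

theorem forward [Fintype V] [Fintype E] {ends : E → Sym2 V}
    (hc : EdgeConnected ends 2) : Nonempty (EarDecomposition ends) := by
  classical
  obtain ⟨S0, ⟨P0⟩⟩ := PD.initial hc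
  have main : ∀ n : ℕ, ∀ S : Set E, PD ends S →
      (Finset.univ.filter (fun e => e ∉ S)).card ≤ n →
      Nonempty (EarDecomposition ends) := by
    intro n
    induction n with
    | zero =>
        intro S P hcard
        refine P.toEarDecomposition hc fun e => ?_
        by_contra he
        have : e ∈ Finset.univ.filter (fun e => e ∉ S) := by simp [he]
        have := Finset.card_pos.2 ⟨e, this⟩
        omega
    | succ n ih =>
        intro S P hcard
        by_cases hall : ∀ e : E, e ∈ S
        · exact P.toEarDecomposition hc hall
        · push_neg at hall
          obtain ⟨e, he⟩ := hall
          obtain ⟨f, x, hf, hx, hxC⟩ := P.find hc he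
          obtain ⟨N, hfN, hw, hnd, hne, hnewS, hpc, hend, hinner⟩ :=
            build_ear hc hf hx hxC (fun e' he' w' hw' => ⟨e', he', hw'⟩)
          obtain ⟨P'⟩ := P.extend N hw hnd hne hnewS hpc hend hinner
          refine ih _ P' (Nat.lt_succ_iff.1 (lt_of_lt_of_le (Finset.card_lt_card ?_) hcard))
          refine Finset.ssubset_iff_of_subset ?_ |>.2 ⟨f, ?_, ?_⟩
          · intro g hg
            simp at hg ⊢
            exact hg.1
          · simp [hf]
          · simp [hfN]
  exact main _ S0 P0 le_rfl

/-- **Robbins.** A multigraph is 2-edge-connected if and only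
if it has an ear decomposition. -/
theorem statement_15 {V E : Type} [Fintype V] [Fintype E] (ends : E → Sym2 V) :
    EdgeConnected ends 2 ↔ Nonempty (EarDecomposition ends) := by
  constructor
  · exact fun h => forward h
  · rintro ⟨D⟩
    exact backward D

end EdgeOrders
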